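/- Let l₁, l₂ > 0 with l₁ + l₂ < 1, and for y₁, y₂ ∈ ℝ define φ(a) = a·(1 − √(l₁²/(y₁/√a + l₁) + l₂²/(y₂/√a + l₂) + (1−l₁−l₂)²/(1 − y₁/√a − l₁ − y₂/√a − l₂))). Then as a → ∞, φ(a) → −(1/(2(1−ρ²)))[(y₁/√σ₁₁)² + (y₂/√σ₂₂)² − 2ρ(y₁/√σ₁₁)(y₂/√σ₂₂)], where σ₁₁ = l₁(1−l₁), σ₂₂ = l₂(1−l₂), and ρ = −√(l₁l₂/((1−l₁)(1−l₂))). -/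

import Mathlib

open Real Filter

private lemma aux_alg (l₁ l₂ u v s : ℝ) (hs : s ≠ 0) (n1 : u + l₁ ≠ 0) (n2 : v + l₂ ≠ 0)
    (n3 : 1 - u - l₁ - v - l₂ ≠ 0) :
    l₁ ^ 2 / (u + l₁) + l₂ ^ 2 / (v + l₂) + (1 - l₁ - l₂) ^ 2 / (1 - u - l₁ - v - l₂)
    = 1 + ((u * s) ^ 2 / (u + l₁) + (v * s) ^ 2 / (v + l₂) +
        (u * s + v * s) ^ 2 / (1 - u - l₁ - v - l₂)) / s ^ 2 := by
  field_simp
  ring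

/-- The exponent limit in the finite-dimensional CLT for the normalized inverse-Gaussian
process: φ(a) → −(1/(2(1−ρ²)))[(y₁/√σ₁₁)² + (y₂/√σ₂₂)² − 2ρ(y₁/√σ₁₁)(y₂/√σ₂₂)]
as a → ∞, where σ₁₁ = l₁(1−l₁), σ₂₂ = l₂(1−l₂), ρ = −√(l₁l₂/((1−l₁)(1−l₂))). -/
theorem exponent_limit (l₁ l₂ : ℝ) (h1 : 0 < l₁) (h2 : 0 < l₂) (h12 : l₁ + l₂ < 1)
    (y₁ y₂ σ₁₁ σ₂₂ ρ : ℝ)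
    (hσ₁₁ : σ₁₁ = l₁ * (1 - l₁)) (hσ₂₂ : σ₂₂ = l₂ * (1 - l₂))
    (hρ : ρ = -Real.sqrt (l₁ * l₂ / ((1 - l₁) * (1 - l₂)))) :
    Tendsto (fun a : ℝ => a * (1 - Real.sqrt
        (l₁ ^ 2 / (y₁ / Real.sqrt a + l₁) + l₂ ^ 2 / (y₂ / Real.sqrt a + l₂) +
          (1 - l₁ - l₂) ^ 2 /
            (1 - y₁ / Real.sqrt a - l₁ - y₂ / Real.sqrt a - l₂))))
      atTop
      (nhds (-(1 / (2 * (1 - ρ ^ 2))) *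
        ((y₁ / Real.sqrt σ₁₁) ^ 2 + (y₂ / Real.sqrt σ₂₂) ^ 2 -
          2 * ρ * (y₁ / Real.sqrt σ₁₁) * (y₂ / Real.sqrt σ₂₂)))) := by
  have hl1 : l₁ < 1 := by linarith
  have hl2 : l₂ < 1 := by linarith
  have hL : (0:ℝ) < 1 - l₁ - l₂ := by linarith
  set c : ℝ := y₁ ^ 2 / l₁ + y₂ ^ 2 / l₂ + (y₁ + y₂) ^ 2 / (1 - l₁ - l₂) with hc
  -- Step 1: the target equals -c/2
  have hs1pos : (0:ℝ) < σ₁₁ := by rw [hσ₁₁]; nlinarith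
  have hs2pos : (0:ℝ) < σ₂₂ := by rw [hσ₂₂]; nlinarith
  have hsq1 : Real.sqrt σ₁₁ ^ 2 = σ₁₁ := Real.sq_sqrt hs1pos.le
  have hsq2 : Real.sqrt σ₂₂ ^ 2 = σ₂₂ := Real.sq_sqrt hs2pos.le
  have hs1ne : Real.sqrt σ₁₁ ≠ 0 := by positivity
  have hs2ne : Real.sqrt σ₂₂ ≠ 0 := by positivity
  have hq : (0:ℝ) ≤ l₁ * l₂ / ((1 - l₁) * (1 - l₂)) :=
    div_nonneg (by positivity) (by nlinarith)
  have hρ2 : ρ ^ 2 = l₁ * l₂ / ((1 - l₁) * (1 - l₂)) := by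
    rw [hρ, neg_pow, Real.sq_sqrt hq]; ring
  have hρss : ρ * (Real.sqrt σ₁₁ * Real.sqrt σ₂₂) = -(l₁ * l₂) := by
    have hA : (0:ℝ) ≤ l₁ * (1 - l₁) := by nlinarith
    rw [hρ, hσ₁₁, hσ₂₂, ← Real.sqrt_mul hA, neg_mul, ← Real.sqrt_mul hq, neg_inj]
    rw [show l₁ * l₂ / ((1 - l₁) * (1 - l₂)) * (l₁ * (1 - l₁) * (l₂ * (1 - l₂))) =
      (l₁ * l₂) ^ 2 by
        have e1 : (1 - l₁) ≠ 0 := by linarith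
        have e2 : (1 - l₂) ≠ 0 := by linarith
        field_simp]
    exact Real.sqrt_sq (by positivity)
  have hρ2ne : 1 - ρ ^ 2 ≠ 0 := by
    rw [hρ2]
    have : l₁ * l₂ / ((1 - l₁) * (1 - l₂)) < 1 := by
      rw [div_lt_one (by nlinarith)]; nlinarith
    linarith
  have key : -(1 / (2 * (1 - ρ ^ 2))) *
        ((y₁ / Real.sqrt σ₁₁) ^ 2 + (y₂ / Real.sqrt σ₂₂) ^ 2 -
          2 * ρ * (y₁ / Real.sqrt σ₁₁) * (y₂ / Real.sqrt σ₂₂)) = -c / 2 := by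
    have e1 : (y₁ / Real.sqrt σ₁₁) ^ 2 = y₁ ^ 2 / σ₁₁ := by rw [div_pow, hsq1]
    have e2 : (y₂ / Real.sqrt σ₂₂) ^ 2 = y₂ ^ 2 / σ₂₂ := by rw [div_pow, hsq2]
    have e3 : 2 * ρ * (y₁ / Real.sqrt σ₁₁) * (y₂ / Real.sqrt σ₂₂)
        = -(2 * (l₁ * l₂) * y₁ * y₂ / (σ₁₁ * σ₂₂)) := by
      have hss : Real.sqrt σ₁₁ ^ 2 * Real.sqrt σ₂₂ ^ 2 = σ₁₁ * σ₂₂ := by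
        rw [hsq1, hsq2]
      have : 2 * ρ * (y₁ / Real.sqrt σ₁₁) * (y₂ / Real.sqrt σ₂₂)
          = 2 * (ρ * (Real.sqrt σ₁₁ * Real.sqrt σ₂₂)) * y₁ * y₂ /
            (Real.sqrt σ₁₁ ^ 2 * Real.sqrt σ₂₂ ^ 2) := by
        field_simp
      rw [this, hρss, hsq1, hsq2]; ring
    have hone : 1 - l₁ * l₂ / ((1 - l₁) * (1 - l₂)) = (1 - l₁ - l₂) / ((1 - l₁) * (1 - l₂)) := by
      have n1 : (1 - l₁) ≠ 0 := by linarith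
      have n2 : (1 - l₂) ≠ 0 := by linarith
      field_simp
      ring
    rw [e1, e2, e3, hρ2, hc, hσ₁₁, hσ₂₂, hone]
    have n1 : (1 - l₁) ≠ 0 := by linarith
    have n2 : (1 - l₂) ≠ 0 := by linarith
    have n3 : (1 - l₁ - l₂) ≠ 0 := hL.ne'
    have n4 : l₁ ≠ 0 := h1.ne'
    have n5 : l₂ ≠ 0 := h2.ne'
    field_simp
    ring
  rw [key]
  -- Step 2: the limit
  have hsqrt : Tendsto (fun a : ℝ => Real.sqrt a) atTop atTop := by
    rw [show (fun a : ℝ => Real.sqrt a) = fun a : ℝ => a ^ (1 / 2 : ℝ) from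
      funext fun x => Real.sqrt_eq_rpow x]
    exact tendsto_rpow_atTop (by norm_num)
  have hu : Tendsto (fun a : ℝ => y₁ / Real.sqrt a) atTop (nhds 0) :=
    Tendsto.div_atTop tendsto_const_nhds hsqrt
  have hv : Tendsto (fun a : ℝ => y₂ / Real.sqrt a) atTop (nhds 0) :=
    Tendsto.div_atTop tendsto_const_nhds hsqrt
  set g : ℝ → ℝ := fun a => y₁ ^ 2 / (y₁ / Real.sqrt a + l₁) + y₂ ^ 2 / (y₂ / Real.sqrt a + l₂)
      + (y₁ + y₂) ^ 2 / (1 - y₁ / Real.sqrt a - l₁ - y₂ / Real.sqrt a - l₂) with hgdef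
  have hg : Tendsto g atTop (nhds c) := by
    have t1 : Tendsto (fun a : ℝ => y₁ ^ 2 / (y₁ / Real.sqrt a + l₁)) atTop
        (nhds (y₁ ^ 2 / l₁)) := by
      have := Tendsto.div (tendsto_const_nhds (x := y₁ ^ 2)) (hu.add_const l₁)
        (by simpa using h1.ne')
      rw [zero_add] at this; exact this
    have t2 : Tendsto (fun a : ℝ => y₂ ^ 2 / (y₂ / Real.sqrt a + l₂)) atTop
        (nhds (y₂ ^ 2 / l₂)) := by
      have := Tendsto.div (tendsto_const_nhds (x := y₂ ^ 2)) (hv.add_const l₂)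
        (by simpa using h2.ne')
      rw [zero_add] at this; exact this
    have t3 : Tendsto
        (fun a : ℝ => (y₁ + y₂) ^ 2 / (1 - y₁ / Real.sqrt a - l₁ - y₂ / Real.sqrt a - l₂))
        atTop (nhds ((y₁ + y₂) ^ 2 / (1 - l₁ - l₂))) := by
      have hden : Tendsto (fun a : ℝ => 1 - y₁ / Real.sqrt a - l₁ - y₂ / Real.sqrt a - l₂)
          atTop (nhds (1 - l₁ - l₂)) := by
        have := (((tendsto_const_nhds (x := (1:ℝ))).sub hu).sub_const l₁).sub hv
        simpa using this.sub_const l₂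
      exact Tendsto.div tendsto_const_nhds hden hL.ne'
    exact (t1.add t2).add t3
  have hga : Tendsto (fun a : ℝ => g a / a) atTop (nhds 0) :=
    hg.div_atTop tendsto_id
  have hsf : Tendsto (fun a : ℝ => Real.sqrt (1 + g a / a)) atTop (nhds 1) := by
    have h0 : Tendsto (fun a : ℝ => 1 + g a / a) atTop (nhds 1) := by
      simpa using (tendsto_const_nhds (x := (1:ℝ))).add hga
    have := (Real.continuous_sqrt.tendsto 1).comp h0
    rw [Real.sqrt_one] at this; exact this
  have hmain : Tendsto (fun a : ℝ => -g a / (1 + Real.sqrt (1 + g a / a))) atTop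
      (nhds (-c / 2)) := by
    have h2t := Tendsto.div hg.neg ((tendsto_const_nhds (x := (1:ℝ))).add hsf)
      (by norm_num : (1:ℝ) + 1 ≠ 0)
    rw [show (-c / 2 : ℝ) = -c / (1 + 1) by norm_num]
    exact h2t
  -- Step 3: eventual equality
  refine hmain.congr' ?_
  have e1 : ∀ᶠ a : ℝ in atTop, |y₁ / Real.sqrt a| < l₁ / 2 := by
    have := Metric.tendsto_nhds.mp hu (l₁ / 2) (by positivity)
    simpa only [Real.dist_eq, sub_zero] using this
  have e2 : ∀ᶠ a : ℝ in atTop, |y₂ / Real.sqrt a| < l₂ / 2 := by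
    have := Metric.tendsto_nhds.mp hv (l₂ / 2) (by positivity)
    simpa only [Real.dist_eq, sub_zero] using this
  have e3 : ∀ᶠ a : ℝ in atTop, |y₁ / Real.sqrt a| + |y₂ / Real.sqrt a| < (1 - l₁ - l₂) / 2 := by
    have habs : Tendsto (fun a : ℝ => |y₁ / Real.sqrt a| + |y₂ / Real.sqrt a|) atTop (nhds 0) := by
      simpa using hu.abs.add hv.abs
    have := Metric.tendsto_nhds.mp habs ((1 - l₁ - l₂) / 2) (by positivity)
    filter_upwards [this] with a ha
    rw [Real.dist_eq] at ha
    calc |y₁ / Real.sqrt a| + |y₂ / Real.sqrt a|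
        ≤ |(|y₁ / Real.sqrt a| + |y₂ / Real.sqrt a|) - 0| := by
          rw [sub_zero]; exact le_abs_self _
      _ < (1 - l₁ - l₂) / 2 := ha
  filter_upwards [e1, e2, e3, eventually_gt_atTop (0:ℝ)] with a ha1 ha2 ha3 hapos
  -- pointwise identity
  set s : ℝ := Real.sqrt a with hsdef
  have hs : (0:ℝ) < s := Real.sqrt_pos.2 hapos
  have hs2 : s ^ 2 = a := Real.sq_sqrt hapos.le
  clear_value s
  have hd1 : 0 < y₁ / s + l₁ := by
    have := (abs_lt.mp ha1).1; linarith
  have hd2 : 0 < y₂ / s + l₂ := by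
    have := (abs_lt.mp ha2).1; linarith
  have hd3 : 0 < 1 - y₁ / s - l₁ - y₂ / s - l₂ := by
    have b1 := le_abs_self (y₁ / s)
    have b2 := le_abs_self (y₂ / s)
    linarith
  set F : ℝ := l₁ ^ 2 / (y₁ / s + l₁) + l₂ ^ 2 / (y₂ / s + l₂) +
      (1 - l₁ - l₂) ^ 2 / (1 - y₁ / s - l₁ - y₂ / s - l₂) with hF
  clear_value F
  have hgae : g a = y₁ ^ 2 / (y₁ / s + l₁) + y₂ ^ 2 / (y₂ / s + l₂) +
      (y₁ + y₂) ^ 2 / (1 - y₁ / s - l₁ - y₂ / s - l₂) := by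
    simp only [hgdef, hsdef]
  clear_value g
  have hfe : F = 1 + g a / a := by
    have h := aux_alg l₁ l₂ (y₁ / s) (y₂ / s) s hs.ne' hd1.ne' hd2.ne' hd3.ne'
    rw [div_mul_cancel₀ y₁ hs.ne', div_mul_cancel₀ y₂ hs.ne'] at h
    rw [hF, hgae, ← hs2]
    exact h
  have hFpos : 0 < F := by
    rw [hF]
    have p1 : 0 < l₁ ^ 2 / (y₁ / s + l₁) := div_pos (by positivity) hd1
    have p2 : 0 < l₂ ^ 2 / (y₂ / s + l₂) := div_pos (by positivity) hd2
    have p3 : 0 < (1 - l₁ - l₂) ^ 2 / (1 - y₁ / s - l₁ - y₂ / s - l₂) :=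
      div_pos (by positivity) hd3
    linarith
  have hsfF : Real.sqrt F ^ 2 = F := Real.sq_sqrt hFpos.le
  have h1F : (0:ℝ) < 1 + Real.sqrt F := by positivity
  show -g a / (1 + Real.sqrt (1 + g a / a)) = a * (1 - Real.sqrt F)
  rw [← hfe]
  rw [div_eq_iff h1F.ne']
  have haf : a * (1 - F) = -g a := by
    rw [hfe]
    field_simp [hapos.ne']
    ring
  linear_combination a * hsfF - haf
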